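/- (Gilbert–Varshamov-type covering bound.) There exists a linear code C ⊆ F_q^n with error-correction capability at least t and dimension dim C ≥ n − ⌈log_q |ΔB_λ(t)|⌉. -/

import Mathlib

variable {F : Type} [Field F] [Fintype F] [DecidableEq F]

/-- Weighted-Hamming weight of a block-partitioned vector. -/
def wL {m : ℕ} (n : Fin m → ℕ) (lam : Fin m → ℕ) (a : ∀ ℓ, Fin (n ℓ) → F) : ℕ :=
  ∑ ℓ, lam ℓ * hammingNorm (a ℓ)

/-- `τ_λ(c) + 1`: minimum over `r` of `max {w_λ(r), w_λ(c − r)}`. -/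
noncomputable def tauAux {m : ℕ} (n lam : Fin m → ℕ) (c : ∀ ℓ, Fin (n ℓ) → F) : ℕ :=
  sInf {x | ∃ r : ∀ ℓ, Fin (n ℓ) → F, x = max (wL n lam r) (wL n lam (c - r))}

/-- Error-correction radius `τ_λ(c)`. -/
noncomputable def tau {m : ℕ} (n lam : Fin m → ℕ) (c : ∀ ℓ, Fin (n ℓ) → F) : ℕ :=
  tauAux n lam c - 1

/-- Weighted-Hamming ball of radius `t`. -/
def ball {m : ℕ} (n lam : Fin m → ℕ) (t : ℕ) : Set (∀ ℓ, Fin (n ℓ) → F) :=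
  {x | wL n lam x ≤ t}

/-- Difference set of the weighted-Hamming ball of radius `t`. -/
def dball {m : ℕ} (n lam : Fin m → ℕ) (t : ℕ) : Set (∀ ℓ, Fin (n ℓ) → F) :=
  {z | ∃ x ∈ ball n lam t, ∃ y ∈ ball n lam t, z = x - y}

/-- Minimum weighted-Hamming distance of a linear code. -/
noncomputable def dL {m : ℕ} (n lam : Fin m → ℕ) (C : Submodule F (∀ ℓ, Fin (n ℓ) → F)) : ℕ :=
  sInf {x | ∃ c ∈ C, c ≠ 0 ∧ x = wL n lam c}

/-- Error-correction capability of a linear code. -/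
noncomputable def tL {m : ℕ} (n lam : Fin m → ℕ) (C : Submodule F (∀ ℓ, Fin (n ℓ) → F)) : ℕ :=
  sInf {x | ∃ c ∈ C, c ≠ 0 ∧ x = tau n lam c}

lemma wL_smul {m : ℕ} (n lam : Fin m → ℕ) {a : F} (ha : a ≠ 0)
    (x : ∀ ℓ, Fin (n ℓ) → F) : wL n lam (a • x) = wL n lam x := by
  unfold wL
  refine Finset.sum_congr rfl fun ℓ _ => ?_
  congr 1
  have : (a • x) ℓ = a • (x ℓ) := rfl
  rw [this]
  exact hammingNorm_smul (fun _ b c h => mul_left_cancel₀ ha (by simpa [smul_eq_mul] using h))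
    (x ℓ)

lemma zero_mem_dball {m : ℕ} (n lam : Fin m → ℕ) (t : ℕ) :
    (0 : ∀ ℓ, Fin (n ℓ) → F) ∈ dball n lam t := by
  refine ⟨0, ?_, 0, ?_, by simp⟩ <;> simp [ball, wL]

lemma smul_mem_dball {m : ℕ} {n lam : Fin m → ℕ} {t : ℕ} {a : F} (ha : a ≠ 0)
    {z : ∀ ℓ, Fin (n ℓ) → F} (hz : z ∈ dball n lam t) : a • z ∈ dball n lam t := by
  obtain ⟨x, hx, y, hy, rfl⟩ := hz
  exact ⟨a • x, by simpa [ball, wL_smul n lam ha] using hx,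
         a • y, by simpa [ball, wL_smul n lam ha] using hy, smul_sub a x y⟩

/-- Gilbert–Varshamov-type covering bound: there is a linear code with
error-correction capability at least `t` and dimension at least `n − ⌈log_q |ΔB_λ(t)|⌉`. -/
theorem covering_bound {m : ℕ} (n lam : Fin m → ℕ) (hlam : ∀ ℓ, 1 ≤ lam ℓ) (t : ℕ) :
    ∃ C : Submodule F (∀ ℓ, Fin (n ℓ) → F),
      (C : Set (∀ ℓ, Fin (n ℓ) → F)) ∩ dball n lam t = {0} ∧
      (∑ ℓ, n ℓ) -
          Nat.clog (Fintype.card F)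
            (Nat.card (dball n lam t : Set (∀ ℓ, Fin (n ℓ) → F))) ≤
        Module.finrank F C := by
  classical
  set D : Set (∀ ℓ, Fin (n ℓ) → F) := dball n lam t with hD
  set q := Fintype.card F with hq
  have hq1 : 1 < q := Fintype.one_lt_card
  set N : ℕ := ∑ ℓ, n ℓ with hN
  have hNrank : Module.finrank F (∀ ℓ, Fin (n ℓ) → F) = N := by
    rw [Module.finrank_pi_fintype, hN]
    exact Finset.sum_congr rfl fun ℓ _ => by
      rw [Module.finrank_pi, Fintype.card_fin]
  set P : Submodule F (∀ ℓ, Fin (n ℓ) → F) → Prop :=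
    fun C => (C : Set (∀ ℓ, Fin (n ℓ) → F)) ∩ D = {0} with hP
  have hPbot : P ⊥ := by
    ext z
    constructor
    · rintro ⟨hz, -⟩; simpa using hz
    · rintro rfl
      exact ⟨Submodule.zero_mem _, zero_mem_dball n lam t⟩
  set S : Set ℕ := {k | ∃ C : Submodule F (∀ ℓ, Fin (n ℓ) → F),
    P C ∧ Module.finrank F C = k} with hS
  have hSne : S.Nonempty := ⟨_, ⊥, hPbot, rfl⟩
  have hSbdd : BddAbove S := by
    refine ⟨N, ?_⟩
    rintro k ⟨C, -, rfl⟩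
    exact hNrank ▸ Submodule.finrank_le C
  obtain ⟨C, hC, hCk⟩ : ∃ C : Submodule F (∀ ℓ, Fin (n ℓ) → F),
      P C ∧ Module.finrank F C = sSup S := Nat.sSup_mem hSne hSbdd
  set k := sSup S with hk
  refine ⟨C, hC, ?_⟩
  rw [hCk]
  have hcov : ∀ v : (∀ ℓ, Fin (n ℓ) → F), ∃ c ∈ C, ∃ d ∈ D, v = c + d := by
    intro v
    by_contra hv
    push_neg at hv
    have hvC : v ∉ C := fun h => hv v h 0 (zero_mem_dball n lam t) (by simp)
    set C' : Submodule F (∀ ℓ, Fin (n ℓ) → F) := C ⊔ F ∙ v with hC'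
    have hPC' : P C' := by
      ext z
      constructor
      · rintro ⟨hzC', hzD⟩
        obtain ⟨c, hc, w, hw, rfl⟩ := Submodule.mem_sup.mp hzC'
        obtain ⟨a, rfl⟩ := Submodule.mem_span_singleton.mp hw
        rcases eq_or_ne a 0 with rfl | ha
        · have : c ∈ (C : Set (∀ ℓ, Fin (n ℓ) → F)) ∩ D := ⟨hc, by simpa using hzD⟩
          rw [hC] at this
          simpa using this
        · exfalso
          refine hv (-(a⁻¹ • c)) (Submodule.neg_mem _ (Submodule.smul_mem _ _ hc))
            (a⁻¹ • (c + a • v)) (smul_mem_dball (inv_ne_zero ha) hzD) ?_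
          rw [smul_add, smul_smul, inv_mul_cancel₀ ha, one_smul]
          abel
      · rintro rfl
        exact ⟨Submodule.zero_mem _, zero_mem_dball n lam t⟩
    have hlt : C < C' := by
      refine lt_of_le_of_ne le_sup_left fun h => hvC ?_
      rw [h]
      exact Submodule.mem_sup_right (Submodule.mem_span_singleton_self v)
    have hfr : Module.finrank F C < Module.finrank F C' :=
      Submodule.finrank_lt_finrank_of_lt hlt
    have hmem : Module.finrank F C' ∈ S := ⟨C', hPC', rfl⟩
    have := le_csSup hSbdd hmem
    omega
  have finC : Finite C := Subtype.finite
  have finD : Finite D := Subtype.finite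
  have finCD : Finite (C × D) := Finite.instProd
  have hsurj : Function.Surjective
      (fun p : C × D => (p.1 : (∀ ℓ, Fin (n ℓ) → F)) + (p.2 : (∀ ℓ, Fin (n ℓ) → F))) := by
    intro v
    obtain ⟨c, hc, d, hd, rfl⟩ := hcov v
    exact ⟨(⟨c, hc⟩, ⟨d, hd⟩), rfl⟩
  have hcard : Nat.card (∀ ℓ, Fin (n ℓ) → F) ≤ Nat.card C * Nat.card D :=
    calc Nat.card (∀ ℓ, Fin (n ℓ) → F) ≤ Nat.card (C × D) :=
          Nat.card_le_card_of_surjective _ hsurj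
      _ = Nat.card C * Nat.card D := Nat.card_prod _ _
  have hcardV : Nat.card (∀ ℓ, Fin (n ℓ) → F) = q ^ N := by
    rw [Nat.card_eq_fintype_card, Fintype.card_pi]
    simp only [Fintype.card_fun, Fintype.card_fin, ← hq]
    rw [hN, Finset.prod_pow_eq_pow_sum]
  have hcardC : Nat.card C = q ^ k := by
    rw [Nat.card_eq_fintype_card, Module.card_eq_pow_finrank (K := F) (V := C), hCk]
  have hkN : k ≤ N := by
    rw [← hCk, ← hNrank]; exact Submodule.finrank_le C
  have hpow : q ^ (N - k) ≤ Nat.card D := by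
    have h1 : q ^ k * q ^ (N - k) ≤ q ^ k * Nat.card D := by
      rw [← pow_add, Nat.add_sub_cancel' hkN, ← hcardV, ← hcardC]
      exact hcard
    exact Nat.le_of_mul_le_mul_left h1 (Nat.pow_pos (by omega))
  have hDle : Nat.card D ≤ q ^ Nat.clog q (Nat.card D) := Nat.le_pow_clog hq1 _
  have hclog : N - k ≤ Nat.clog q (Nat.card D) :=
    (Nat.pow_le_pow_iff_right hq1).mp (le_trans hpow hDle)
  omega
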